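/- Let n be a positive integer and ψ a Dirichlet character modulo n with conductor m. Let ñ denote the radical of n (the product of the distinct primes dividing n), set r = lcm(ñ, m), and define ξ_n = Σ_{d : ñ∣d∣n} ζ_d ∈ ℚ(μ_n). Then Σ_{a∈(ℤ/nℤ)ˣ} \overline{ψ}(a)·σ_a(ξ_n) = Σ_{a∈(ℤ/nℤ)ˣ} \overline{ψ}(a)·σ_a(ζ_r) in ℂ; concretely, Σ_{a∈(ℤ/nℤ)ˣ} \overline{ψ}(a)·Σ_{ñ∣d∣n} e^{2πi a/d} = Σ_{a∈(ℤ/nℤ)ˣ} \overline{ψ}(a)·e^{2πi a/r}. -/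

import Mathlib

open Complex

/-- The radical `ñ` of `n`: the product of the distinct primes dividing `n`. -/
def Nat.rad (n : ℕ) : ℕ := ∏ p ∈ n.primeFactors, p

namespace Stmt0Aux

open Finset ZMod DirichletCharacter

variable {n : ℕ} [NeZero n] (ψ : DirichletCharacter ℂ n)

lemma ft_gcd {d₁ d₂ : ℕ} (h1 : ψ.FactorsThrough d₁) (h2 : ψ.FactorsThrough d₂) :
    ψ.FactorsThrough (Nat.gcd d₁ d₂) := by
  have hd1 : d₁ ∣ n := h1.dvd
  have hd2 : d₂ ∣ n := h2.dvd
  have hg : Nat.gcd d₁ d₂ ∣ n := (Nat.gcd_dvd_left _ _).trans hd1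
  rw [DirichletCharacter.factorsThrough_iff_ker_unitsMap hg]
  intro u hu
  rw [MonoidHom.mem_ker] at hu
  set a : ℕ := (u : ZMod n).val with ha
  have hcop_a : Nat.Coprime a n := ZMod.val_coe_unit_coprime u
  have hag : a ≡ 1 [MOD Nat.gcd d₁ d₂] := by
    rw [← ZMod.natCast_eq_natCast_iff]
    have hcg : ((a : ℕ) : ZMod (Nat.gcd d₁ d₂)) =
        ZMod.castHom hg (ZMod (Nat.gcd d₁ d₂)) (u : ZMod n) := by
      rw [ZMod.castHom_apply, ha, ZMod.natCast_val]
    have hcg2 : ZMod.castHom hg (ZMod (Nat.gcd d₁ d₂)) (u : ZMod n) = 1 := by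
      have := congrArg (Units.val) hu
      simpa [ZMod.unitsMap_def] using this
    rw [hcg, hcg2, Nat.cast_one]
  obtain ⟨k, hk1, hk2⟩ := Nat.chineseRemainder' hag
  have hcopk1 : Nat.Coprime k d₁ := by
    have h := Nat.ModEq.gcd_eq hk1
    have h2 : Nat.Coprime a d₁ := Nat.Coprime.coprime_dvd_right hd1 hcop_a
    exact h.trans h2
  have hcopk2 : Nat.Coprime k d₂ := by
    have h := Nat.ModEq.gcd_eq hk2
    simpa [Nat.Coprime] using h.trans (Nat.coprime_one_left d₂)
  set L : ℕ := Nat.lcm d₁ d₂ with hL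
  have hLn : L ∣ n := Nat.lcm_dvd hd1 hd2
  haveI : NeZero L := ⟨fun h => NeZero.ne n (Nat.eq_zero_of_zero_dvd (h ▸ hLn))⟩
  have hcopL : Nat.Coprime k L :=
    Nat.Coprime.coprime_dvd_right (Nat.lcm_dvd_mul d₁ d₂) (Nat.Coprime.mul_right hcopk1 hcopk2)
  obtain ⟨u₂, hu₂⟩ := ZMod.unitsMap_surjective hLn (ZMod.unitOfCoprime k hcopL)
  have hval : ∀ (d : ℕ) (hdL : d ∣ L),
      ((ZMod.unitsMap (hdL.trans hLn) u₂ : (ZMod d)ˣ) : ZMod d) = (k : ZMod d) := by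
    intro d hdL
    have hcomp : ZMod.unitsMap (hdL.trans hLn) u₂ = ZMod.unitsMap hdL (ZMod.unitsMap hLn u₂) := by
      rw [← ZMod.unitsMap_comp hdL hLn]; rfl
    rw [hcomp, hu₂]
    have h3 : ((ZMod.unitsMap hdL (ZMod.unitOfCoprime k hcopL) : (ZMod d)ˣ) : ZMod d) =
        ZMod.castHom hdL (ZMod d) ((ZMod.unitOfCoprime k hcopL : ZMod L)) := by
      simp [ZMod.unitsMap_def]
    rw [h3, ZMod.coe_unitOfCoprime, map_natCast]
  have h2' : ZMod.unitsMap hd2 u₂ = 1 := by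
    apply Units.ext
    have h := hval d₂ (Nat.dvd_lcm_right d₁ d₂)
    have heq : ZMod.unitsMap ((Nat.dvd_lcm_right d₁ d₂).trans hLn) u₂ = ZMod.unitsMap hd2 u₂ := rfl
    rw [heq] at h
    rw [h]
    have h1 : (k : ZMod d₂) = ((1 : ℕ) : ZMod d₂) := (ZMod.natCast_eq_natCast_iff _ _ _).mpr hk2
    simpa using h1
  have h1' : ZMod.unitsMap hd1 u₂ = ZMod.unitsMap hd1 u := by
    apply Units.ext
    have h := hval d₁ (Nat.dvd_lcm_left d₁ d₂)
    have heq : ZMod.unitsMap ((Nat.dvd_lcm_left d₁ d₂).trans hLn) u₂ = ZMod.unitsMap hd1 u₂ := rfl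
    rw [heq] at h
    rw [h]
    have hka : (k : ZMod d₁) = (a : ZMod d₁) := (ZMod.natCast_eq_natCast_iff _ _ _).mpr hk1
    rw [hka]
    simp [ZMod.unitsMap_def, ZMod.castHom_apply, ha, ZMod.natCast_val]
  have hk1mem : u * u₂⁻¹ ∈ (ZMod.unitsMap hd1).ker := by
    rw [MonoidHom.mem_ker, map_mul, map_inv, h1', mul_inv_cancel]
  have hk2mem : u₂ ∈ (ZMod.unitsMap hd2).ker := by
    rw [MonoidHom.mem_ker]; exact h2'
  have t1 : ψ.toUnitHom (u * u₂⁻¹) = 1 :=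
    (DirichletCharacter.factorsThrough_iff_ker_unitsMap hd1).mp h1 hk1mem
  have t2 : ψ.toUnitHom u₂ = 1 :=
    (DirichletCharacter.factorsThrough_iff_ker_unitsMap hd2).mp h2 hk2mem
  rw [MonoidHom.mem_ker]
  calc ψ.toUnitHom u = ψ.toUnitHom ((u * u₂⁻¹) * u₂) := by rw [inv_mul_cancel_right]
  _ = ψ.toUnitHom (u * u₂⁻¹) * ψ.toUnitHom u₂ := map_mul _ _ _
  _ = 1 := by rw [t1, t2, mul_one]

lemma conductor_dvd_of_ft {d : ℕ} (h : ψ.FactorsThrough d) : ψ.conductor ∣ d := by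
  have hg := ft_gcd ψ (DirichletCharacter.factorsThrough_conductor ψ) h
  have hle : ψ.conductor ≤ Nat.gcd ψ.conductor d := Nat.sInf_le hg
  have hpos : 0 < ψ.conductor :=
    Nat.pos_of_ne_zero (DirichletCharacter.conductor_ne_zero ψ)
  have hge : Nat.gcd ψ.conductor d ≤ ψ.conductor :=
    Nat.le_of_dvd hpos (Nat.gcd_dvd_left _ _)
  have heq : Nat.gcd ψ.conductor d = ψ.conductor := le_antisymm hge hle
  exact heq ▸ Nat.gcd_dvd_right _ _

lemma ft_of_conductor_dvd {e : ℕ} (h1 : ψ.conductor ∣ e) (h2 : e ∣ n) :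
    ψ.FactorsThrough e := by
  have hft := DirichletCharacter.factorsThrough_conductor ψ
  refine ⟨h2, DirichletCharacter.changeLevel h1 hft.χ₀, ?_⟩
  conv_lhs => rw [hft.eq_changeLevel]
  rw [← DirichletCharacter.changeLevel_trans _ h1 h2]

lemma exp_eq (d : ℕ) [NeZero d] (x : ℕ) :
    Complex.exp (2 * Real.pi * Complex.I * (x : ℂ) / (d : ℂ)) =
      ZMod.stdAddChar (N := d) ((x : ℕ) : ZMod d) := by
  have h := ZMod.stdAddChar_coe (N := d) (x : ℤ)
  rw [Int.cast_natCast] at h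
  rw [h]
  norm_num

lemma sum_eq_zero_of_not_ft {d : ℕ} (hdn : d ∣ n) (hft : ¬ ψ.FactorsThrough d) :
    ∑ a : (ZMod n)ˣ, (starRingEnd ℂ) (ψ a) *
      Complex.exp (2 * Real.pi * Complex.I * (((a : ZMod n).val : ℕ) : ℂ) / (d : ℂ)) = 0 := by
  haveI : NeZero d := ⟨fun h => NeZero.ne n (Nat.eq_zero_of_zero_dvd (h ▸ hdn))⟩
  set φ : ZMod n →+* ZMod d := ZMod.castHom hdn (ZMod d) with hφ
  have hval : ∀ x : ZMod n, (((x.val : ℕ)) : ZMod d) = φ x := by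
    intro x
    rw [hφ, ZMod.castHom_apply, ZMod.natCast_val]
  rw [DirichletCharacter.factorsThrough_iff_ker_unitsMap hdn, SetLike.le_def] at hft
  push_neg at hft
  obtain ⟨c, hc1, hc2⟩ := hft
  rw [MonoidHom.mem_ker] at hc1 hc2
  have hψc : ψ (c : ZMod n) ≠ 1 := by
    intro h
    exact hc2 (Units.ext (by rw [MulChar.coe_toUnitHom, h, Units.val_one]))
  have hφc : φ (c : ZMod n) = 1 := by
    have := congrArg (Units.val) hc1
    simpa [ZMod.unitsMap_def, hφ] using this
  set S := ∑ a : (ZMod n)ˣ, (starRingEnd ℂ) (ψ a) *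
      Complex.exp (2 * Real.pi * Complex.I * (((a : ZMod n).val : ℕ) : ℂ) / (d : ℂ)) with hS
  have key : (starRingEnd ℂ) (ψ (c : ZMod n)) * S = S := by
    rw [hS, Finset.mul_sum]
    refine Fintype.sum_equiv (Equiv.mulLeft c) _ _ ?_
    intro a
    have hmul : ((Equiv.mulLeft c a : (ZMod n)ˣ) : ZMod n) = (c : ZMod n) * (a : ZMod n) := rfl
    rw [hmul, map_mul, map_mul]
    rw [exp_eq, exp_eq, hval, hval]
    have hφmul : φ ((c : ZMod n) * (a : ZMod n)) = φ (a : ZMod n) := by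
      rw [map_mul, hφc, one_mul]
    rw [hφmul]
    ring
  have hz : ((starRingEnd ℂ) (ψ (c : ZMod n)) - 1) * S = 0 := by
    rw [sub_mul, one_mul, key, sub_self]
  rcases mul_eq_zero.mp hz with h | h
  · exfalso
    apply hψc
    have h1 : (starRingEnd ℂ) (ψ (c : ZMod n)) = 1 := by linear_combination h
    have h2 := congrArg (starRingEnd ℂ) h1
    simpa using h2
  · exact h

lemma sum_eq_zero_of_prime {d : ℕ} (p e : ℕ) (hp : p.Prime) (hde : d = p * e) (hdn : d ∣ n)
    (hrad : ∀ q : ℕ, q.Prime → q ∣ n → q ∣ e) (hft : ψ.FactorsThrough e) :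
    ∑ a : (ZMod n)ˣ, (starRingEnd ℂ) (ψ a) *
      Complex.exp (2 * Real.pi * Complex.I * (((a : ZMod n).val : ℕ) : ℂ) / (d : ℂ)) = 0 := by
  haveI : NeZero d := ⟨fun h => NeZero.ne n (Nat.eq_zero_of_zero_dvd (h ▸ hdn))⟩
  have he0 : e ≠ 0 := by
    rintro rfl
    exact (NeZero.ne d) (by simp [hde])
  have hen : e ∣ n := (Dvd.intro_left p hde.symm).trans hdn
  set φ : ZMod n →+* ZMod d := ZMod.castHom hdn (ZMod d) with hφ
  have hval : ∀ x : ZMod n, (((x.val : ℕ)) : ZMod d) = φ x := by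
    intro x
    rw [hφ, ZMod.castHom_apply, ZMod.natCast_val]
  -- the units 1 + t*e
  have hcop : ∀ t : ℕ, Nat.Coprime (1 + t * e) n := by
    intro t
    apply Nat.coprime_of_dvd
    intro q hq hq1 hqn
    have hqe : q ∣ t * e := Dvd.dvd.mul_left (hrad q hq hqn) t
    have h1 : q ∣ 1 := (Nat.dvd_add_right hqe).mp (by rwa [add_comm] at hq1)
    exact hq.ne_one (Nat.dvd_one.mp h1)
  set c : ℕ → (ZMod n)ˣ := fun t => ZMod.unitOfCoprime (1 + t * e) (hcop t) with hc
  have hψc : ∀ t : ℕ, ψ ((c t : (ZMod n)ˣ) : ZMod n) = 1 := by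
    intro t
    rw [hft.eq_changeLevel, DirichletCharacter.changeLevel_eq_cast_of_dvd _ hft.dvd (c t)]
    have hcast : (ZMod.cast ((c t : ZMod n)) : ZMod e) = ((1 + t * e : ℕ) : ZMod e) := by
      rw [hc]
      simp only [ZMod.coe_unitOfCoprime]
      rw [← ZMod.castHom_apply (h := hft.dvd), map_natCast]
    rw [hcast]
    have h1 : ((1 + t * e : ℕ) : ZMod e) = 1 := by
      push_cast [ZMod.natCast_self]
      ring
    rw [h1, map_one]
  have hφc : ∀ t : ℕ, φ ((c t : ZMod n)) = ((1 + t * e : ℕ) : ZMod d) := by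
    intro t
    rw [hc]
    simp only [ZMod.coe_unitOfCoprime]
    rw [hφ, map_natCast]
  have hkey : ∀ (x : ZMod d) (t : ℕ),
      ZMod.stdAddChar (((1 + t * e : ℕ) : ZMod d) * x) =
        ZMod.stdAddChar x * ZMod.stdAddChar (e • x) ^ t := by
    intro x t
    have h1 : ((1 + t * e : ℕ) : ZMod d) * x = x + t • (e • x) := by
      simp only [nsmul_eq_mul]
      push_cast
      ring
    rw [h1, AddChar.map_add_eq_mul, AddChar.map_nsmul_eq_pow]
  set S := ∑ a : (ZMod n)ˣ, (starRingEnd ℂ) (ψ a) *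
      Complex.exp (2 * Real.pi * Complex.I * (((a : ZMod n).val : ℕ) : ℂ) / (d : ℂ)) with hS
  have hSform : S = ∑ a : (ZMod n)ˣ, (starRingEnd ℂ) (ψ a) * ZMod.stdAddChar (φ (a : ZMod n)) := by
    rw [hS]
    refine Finset.sum_congr rfl fun a _ => ?_
    rw [exp_eq, hval]
  have hrw : ∀ t : ℕ, S = ∑ a : (ZMod n)ˣ, (starRingEnd ℂ) (ψ a) *
      (ZMod.stdAddChar (φ (a : ZMod n)) * ZMod.stdAddChar (e • φ (a : ZMod n)) ^ t) := by
    intro t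
    rw [hSform]
    refine (Fintype.sum_equiv (Equiv.mulLeft (c t)) _ _ ?_).symm
    intro a
    show (starRingEnd ℂ) (ψ ((a : (ZMod n)ˣ) : ZMod n)) *
        (ZMod.stdAddChar (φ (a : ZMod n)) * ZMod.stdAddChar (e • φ (a : ZMod n)) ^ t)
      = (starRingEnd ℂ) (ψ (((c t * a : (ZMod n)ˣ)) : ZMod n)) *
          ZMod.stdAddChar (φ ((c t * a : (ZMod n)ˣ) : ZMod n))
    have hmul : ((c t * a : (ZMod n)ˣ) : ZMod n) = (c t : ZMod n) * (a : ZMod n) :=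
      Units.val_mul _ _
    rw [hmul, map_mul ψ, hψc t, one_mul, map_mul φ, hφc t, hkey]
  have hgeom : ∀ a : (ZMod n)ˣ,
      ∑ t ∈ Finset.range p, ZMod.stdAddChar (e • φ (a : ZMod n)) ^ t = 0 := by
    intro a
    set z := ZMod.stdAddChar (e • φ (a : ZMod n)) with hzdef
    have hsmul : e • φ (a : ZMod n) = ((e * (a : ZMod n).val : ℕ) : ZMod d) := by
      rw [Nat.cast_mul, nsmul_eq_mul, hval]
    have hne : e • φ (a : ZMod n) ≠ 0 := by
      rw [hsmul]
      rw [Ne, ZMod.natCast_eq_zero_iff]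
      intro hdvd
      rw [hde, mul_comm p e] at hdvd
      have hpa : p ∣ (a : ZMod n).val :=
        (Nat.mul_dvd_mul_iff_left (Nat.pos_of_ne_zero he0)).mp hdvd
      have hpn : p ∣ n := hde ▸ (Dvd.intro e rfl) |>.trans hdn
      have : p ∣ 1 := (ZMod.val_coe_unit_coprime a) ▸ Nat.dvd_gcd hpa hpn
      exact hp.ne_one (Nat.dvd_one.mp this)
    have hz1 : z ≠ 1 := by
      intro h
      apply hne
      apply ZMod.injective_stdAddChar
      rw [← hzdef] at *
      rw [AddChar.map_zero_eq_one]
      exact h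
    have hzp : z ^ p = 1 := by
      rw [hzdef, ← AddChar.map_nsmul_eq_pow, smul_smul, ← hde]
      have : (d : ℕ) • φ (a : ZMod n) = 0 := by
        rw [nsmul_eq_mul, ZMod.natCast_self, zero_mul]
      rw [this, AddChar.map_zero_eq_one]
    rw [geom_sum_eq hz1, hzp, sub_self, zero_div]
  have hp0 : (p : ℂ) ≠ 0 := Nat.cast_ne_zero.mpr hp.pos.ne'
  have hsum : (p : ℂ) * S = 0 := by
    have h1 : (p : ℂ) * S = ∑ _t ∈ Finset.range p, S := by
      rw [Finset.sum_const, Finset.card_range, nsmul_eq_mul]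
    rw [h1]
    calc ∑ t ∈ Finset.range p, S
        = ∑ t ∈ Finset.range p, ∑ a : (ZMod n)ˣ, (starRingEnd ℂ) (ψ a) *
            (ZMod.stdAddChar (φ (a : ZMod n)) * ZMod.stdAddChar (e • φ (a : ZMod n)) ^ t) :=
          Finset.sum_congr rfl fun t _ => hrw t
      _ = ∑ a : (ZMod n)ˣ, ∑ t ∈ Finset.range p, (starRingEnd ℂ) (ψ a) *
            (ZMod.stdAddChar (φ (a : ZMod n)) * ZMod.stdAddChar (e • φ (a : ZMod n)) ^ t) :=
          Finset.sum_comm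
      _ = ∑ a : (ZMod n)ˣ, ((starRingEnd ℂ) (ψ a) * ZMod.stdAddChar (φ (a : ZMod n))) *
            ∑ t ∈ Finset.range p, ZMod.stdAddChar (e • φ (a : ZMod n)) ^ t := by
          refine Finset.sum_congr rfl fun a _ => ?_
          rw [Finset.mul_sum]
          exact Finset.sum_congr rfl fun t _ => by ring
      _ = 0 := by
          refine Finset.sum_eq_zero fun a _ => ?_
          rw [hgeom a, mul_zero]
  rcases mul_eq_zero.mp hsum with h | h
  · exact absurd h hp0
  · exact h

end Stmt0Aux

/-- Let `n` be a positive integer, `ψ` a Dirichlet character modulo `n` with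
conductor `m`, `ñ` the radical of `n`, `r = lcm(ñ, m)` and `ξ_n = Σ_{d : ñ∣d∣n} ζ_d`.  Then
`Σ_{a ∈ (ℤ/nℤ)ˣ} ψ̄(a)·σ_a(ξ_n) = Σ_{a ∈ (ℤ/nℤ)ˣ} ψ̄(a)·σ_a(ζ_r)`; concretely, with
`σ_a(ζ_d) = e^{2πia/d}`:
`Σ_{a} ψ̄(a)·Σ_{ñ∣d∣n} e^{2πia/d} = Σ_{a} ψ̄(a)·e^{2πia/r}`. -/
theorem stmt0 (n : ℕ) [NeZero n] (ψ : DirichletCharacter ℂ n)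
    (m : ℕ) (hm : m = ψ.conductor)
    (r : ℕ) (hr : r = Nat.lcm n.rad m) :
    ∑ a : (ZMod n)ˣ, (starRingEnd ℂ) (ψ a) *
        ∑ d ∈ n.divisors.filter (fun d => n.rad ∣ d),
          Complex.exp (2 * Real.pi * Complex.I * ((a : ZMod n).val : ℂ) / (d : ℂ))
      = ∑ a : (ZMod n)ˣ, (starRingEnd ℂ) (ψ a) *
          Complex.exp (2 * Real.pi * Complex.I * ((a : ZMod n).val : ℂ) / (r : ℂ)) := by
  subst hm
  subst hr
  have hradn : n.rad ∣ n := Nat.prod_primeFactors_dvd n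
  have hprime_rad : ∀ q : ℕ, q.Prime → q ∣ n → q ∣ n.rad := fun q hq hqn =>
    Finset.dvd_prod_of_mem _ (Nat.mem_primeFactors.mpr ⟨hq, hqn, NeZero.ne n⟩)
  have hmn : ψ.conductor ∣ n := DirichletCharacter.conductor_dvd_level ψ
  have hrn : Nat.lcm n.rad ψ.conductor ∣ n := Nat.lcm_dvd hradn hmn
  have hrmem : Nat.lcm n.rad ψ.conductor ∈ n.divisors.filter (fun d => n.rad ∣ d) :=
    Finset.mem_filter.mpr ⟨Nat.mem_divisors.mpr ⟨hrn, NeZero.ne n⟩, Nat.dvd_lcm_left _ _⟩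
  simp_rw [Finset.mul_sum]
  rw [Finset.sum_comm]
  rw [Finset.sum_eq_single_of_mem _ hrmem ?_]
  intro d hdmem hdne
  obtain ⟨hddvd, hdrad⟩ := Finset.mem_filter.mp hdmem
  have hdn : d ∣ n := (Nat.mem_divisors.mp hddvd).1
  by_cases hrd : Nat.lcm n.rad ψ.conductor ∣ d
  · obtain ⟨s, hs⟩ := hrd
    set R := Nat.lcm n.rad ψ.conductor with hR
    have hs1 : s ≠ 1 := fun h => hdne (by rw [hs, h, mul_one])
    have hps : s.minFac.Prime := Nat.minFac_prime hs1
    obtain ⟨t, ht⟩ := s.minFac_dvd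
    set q := s.minFac with hq
    have hde : d = q * (R * t) := by rw [hs, ht]; ring
    have hedvd : R * t ∣ d := ⟨q, by rw [hde]; ring⟩
    refine Stmt0Aux.sum_eq_zero_of_prime ψ q (R * t) hps hde hdn ?_ ?_
    · intro q hq hqn
      exact ((hprime_rad q hq hqn).trans (Nat.dvd_lcm_left _ _)).trans (dvd_mul_right R t)
    · exact Stmt0Aux.ft_of_conductor_dvd ψ
        ((Nat.dvd_lcm_right _ _).trans (dvd_mul_right R t)) (hedvd.trans hdn)
  · have hft : ¬ ψ.FactorsThrough d := fun h =>
      hrd (Nat.lcm_dvd hdrad (Stmt0Aux.conductor_dvd_of_ft ψ h))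
    exact Stmt0Aux.sum_eq_zero_of_not_ft ψ hdn hft
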